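/- arXiv:2603.27379 — 3 statements merged into one kernel-verified Lean document; each statement's English description precedes it below -/
import Mathlib

section
/- Assume λ_min(K_ϑ) > 0. For every τ with 0 < τ ≤ Δ/2 and every ω ∈ ℝ^d with min_{1≤ℓ≤s} |ω − θ_ℓ| ≥ τ, the MUSIC function q = q_U satisfies q(ω) ≥ 1 − ‖K‖²_{L∞(B_τᶜ)} − E₀(ϑ) − λ_max(K_ϑ) · max{ |1/λ_max(K_ϑ) − 1| , |1/λ_min(K_ϑ) − 1| }, where ‖K‖_{L∞(B_τᶜ)} := sup_{|ξ| ≥ τ} |K(ξ)|. -/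
noncomputable section

open MeasureTheory Real
open scoped Classical

/-- Second partial derivative `∂ⱼ∂ₖ f (x)` of `f : ℝ^d → ℝ`. -/
def pd2 {d : ℕ} (f : EuclideanSpace ℝ (Fin d) → ℝ) (x : EuclideanSpace ℝ (Fin d))
    (j k : Fin d) : ℝ :=
  iteratedFDeriv ℝ 2 f x ![EuclideanSpace.single j (1 : ℝ), EuclideanSpace.single k (1 : ℝ)]

/-- Fourth partial derivative `∂ⱼ²∂ₖ² f (x)` of `f : ℝ^d → ℝ`. -/
def pd4 {d : ℕ} (f : EuclideanSpace ℝ (Fin d) → ℝ) (x : EuclideanSpace ℝ (Fin d))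
    (j k : Fin d) : ℝ :=
  iteratedFDeriv ℝ 4 f x
    ![EuclideanSpace.single j (1 : ℝ), EuclideanSpace.single j (1 : ℝ),
      EuclideanSpace.single k (1 : ℝ), EuclideanSpace.single k (1 : ℝ)]

/-- The MUSIC function `q_W(ω) = ‖φ_ω - P_W φ_ω‖²` associated with the
orthogonal projection `P` onto a subspace `W ⊆ L²(ν)`. -/
def musicFun {d : ℕ} {ν : Measure (EuclideanSpace ℝ (Fin d))}
    (φ : EuclideanSpace ℝ (Fin d) → Lp ℂ 2 ν)
    (P : Lp ℂ 2 ν →L[ℂ] Lp ℂ 2 ν) (ω : EuclideanSpace ℝ (Fin d)) : ℝ :=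
  ‖φ ω - P (φ ω)‖ ^ 2

/-- `‖∇K‖_{L∞(B_τ)} = sup_{|ξ| ≤ τ} |∇K(ξ)|`. -/
def gradSupBall {d : ℕ} (K : EuclideanSpace ℝ (Fin d) → ℝ) (τ : ℝ) : ℝ :=
  ⨆ ξ : (Metric.closedBall (0 : EuclideanSpace ℝ (Fin d)) τ),
    ‖gradient K (ξ : EuclideanSpace ℝ (Fin d))‖

/-- `‖K‖_{L∞(B_τᶜ)} = sup_{|ξ| ≥ τ} |K(ξ)|`. -/
def kerSupCompl {d : ℕ} (K : EuclideanSpace ℝ (Fin d) → ℝ) (τ : ℝ) : ℝ :=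
  ⨆ ξ : {ξ : EuclideanSpace ℝ (Fin d) // τ ≤ ‖ξ‖}, |K ξ.1|

/-- The energy `E₀(ϑ) = sup_ω ∑_{ℓ : |ω-θ_ℓ| ≥ Δ/2} |K(ω-θ_ℓ)|²`. -/
def energy0 {d s : ℕ} (K : EuclideanSpace ℝ (Fin d) → ℝ)
    (θ : Fin s → EuclideanSpace ℝ (Fin d)) (Δ : ℝ) : ℝ :=
  ⨆ ω : EuclideanSpace ℝ (Fin d),
    ∑ ℓ ∈ Finset.univ.filter (fun ℓ => Δ / 2 ≤ dist ω (θ ℓ)), K (ω - θ ℓ) ^ 2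

/-- The energy `E₁(ϑ) = sup_ω ∑_{ℓ : |ω-θ_ℓ| ≥ Δ/2} |∇K(ω-θ_ℓ)|²`. -/
def energy1 {d s : ℕ} (K : EuclideanSpace ℝ (Fin d) → ℝ)
    (θ : Fin s → EuclideanSpace ℝ (Fin d)) (Δ : ℝ) : ℝ :=
  ⨆ ω : EuclideanSpace ℝ (Fin d),
    ∑ ℓ ∈ Finset.univ.filter (fun ℓ => Δ / 2 ≤ dist ω (θ ℓ)), ‖gradient K (ω - θ ℓ)‖ ^ 2

set_option maxHeartbeats 4000000 in
/-- **Lower bound for the noiseless MUSIC function away from the parameters.**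
If `λ_min(K_ϑ) > 0`, `0 < τ ≤ Δ/2` and `dist(ω, ϑ) ≥ τ`, then
`q(ω) ≥ 1 - ‖K‖²_{L∞(B_τᶜ)} - E₀(ϑ)
  - λ_max(K_ϑ)·max{|1/λ_max(K_ϑ) - 1|, |1/λ_min(K_ϑ) - 1|}`,
where `q = q_U` is the MUSIC function of `U = span{φ_{θ_ℓ}}` and
`λ_min(K_ϑ), λ_max(K_ϑ)` are characterized as the least and greatest values of
the Rayleigh quotient of the kernel matrix `K_ϑ = [K(θ_j - θ_k)]`. -/
theorem stmt2
    {d s : ℕ} (hd : 1 ≤ d) (hs : 1 ≤ s)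
    -- the measure: finite, positive, symmetric, with finite fourth moments
    (ν : Measure (EuclideanSpace ℝ (Fin d))) [IsFiniteMeasure ν]
    (hν0 : ν Set.univ ≠ 0)
    (hνsym : ν.map (fun x => -x) = ν)
    (hmom : Integrable (fun x => ‖x‖ ^ 4) ν)
    -- the measurement kernel `K(ξ) = ν(ℝ^d)⁻¹ ∫ e^{2πi ξ·x} dν(x)`:
    -- real-valued, even, C⁴, with vanishing gradient at the origin
    (K : EuclideanSpace ℝ (Fin d) → ℝ)
    (hK : ∀ ξ, (K ξ : ℂ) = (((ν Set.univ).toReal : ℂ))⁻¹ *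
      ∫ x, Complex.exp ((2 * Real.pi * (inner ℝ ξ x : ℝ) : ℝ) * Complex.I) ∂ν)
    (hKC4 : ContDiff ℝ 4 K)
    (hKeven : ∀ ξ, K (-ξ) = K ξ)
    (hgradK0 : gradient K 0 = 0)
    -- the unit steering vectors `φ_ω(x) = ν(ℝ^d)^{-1/2} e^{2πi ω·x}` in `L²(ν)`
    (φ : EuclideanSpace ℝ (Fin d) → Lp ℂ 2 ν)
    (hφ : ∀ ω, ⇑(φ ω) =ᵐ[ν] fun x => ((Real.sqrt ((ν Set.univ).toReal) : ℂ))⁻¹ *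
      Complex.exp ((2 * Real.pi * (inner ℝ ω x : ℝ) : ℝ) * Complex.I))
    -- the parameters `ϑ` and their minimum separation `Δ`
    (θ : Fin s → EuclideanSpace ℝ (Fin d)) (hθinj : Function.Injective θ)
    (Δ : ℝ) (hΔsep : ∀ j k, j ≠ k → Δ ≤ dist (θ j) (θ k))
    -- extreme eigenvalues of the kernel matrix `K_ϑ`, `λ_min(K_ϑ) > 0`
    (lamKmin lamKmax : ℝ)
    (hlamKmin : IsLeast {r : ℝ | ∃ v : Fin s → ℝ, ∑ i, v i ^ 2 = 1 ∧
      r = ∑ j, ∑ k, v j * K (θ j - θ k) * v k} lamKmin)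
    (hlamKmax : IsGreatest {r : ℝ | ∃ v : Fin s → ℝ, ∑ i, v i ^ 2 = 1 ∧
      r = ∑ j, ∑ k, v j * K (θ j - θ k) * v k} lamKmax)
    (hlamKpos : 0 < lamKmin)
    -- the orthogonal projection `P_U` onto `U = span{φ_{θ_1}, …, φ_{θ_s}}`
    (PU : Lp ℂ 2 ν →L[ℂ] Lp ℂ 2 ν)
    (hPUmem : ∀ f, PU f ∈ Submodule.span ℂ (Set.range fun ℓ => φ (θ ℓ)))
    (hPUorth : ∀ f, f - PU f ∈ (Submodule.span ℂ (Set.range fun ℓ => φ (θ ℓ)))ᗮ)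
    -- the scale `τ` and the point `ω` far from the configuration
    (τ : ℝ) (hτ0 : 0 < τ) (hτΔ : 2 * τ ≤ Δ)
    (ω : EuclideanSpace ℝ (Fin d)) (hω : ∀ ℓ, τ ≤ dist ω (θ ℓ)) :
    1 - kerSupCompl K τ ^ 2 - energy0 K θ Δ
        - lamKmax * max |1 / lamKmax - 1| |1 / lamKmin - 1|
      ≤ musicFun φ PU ω := by
  classical
  have hm0 : 0 < (ν Set.univ).toReal := ENNReal.toReal_pos hν0 (measure_ne_top ν _)
  set m : ℝ := (ν Set.univ).toReal with hmdef
  -- `|K ξ| ≤ 1`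
  have hKb : ∀ ξ, |K ξ| ≤ 1 := by
    intro ξ
    have h1 : ‖(K ξ : ℂ)‖ ≤ 1 := by
      rw [hK ξ, norm_mul]
      have h2 : ‖∫ x, Complex.exp ((2 * Real.pi * (inner ℝ ξ x : ℝ) : ℝ) * Complex.I) ∂ν‖ ≤ m := by
        refine le_trans (norm_integral_le_integral_norm _) (le_of_eq ?_)
        have h3 : ∀ x, ‖Complex.exp ((2 * Real.pi * (inner ℝ ξ x : ℝ) : ℝ) * Complex.I)‖ = 1 := by
          intro x
          rw [Complex.norm_exp_ofReal_mul_I]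
        calc (∫ x, ‖Complex.exp ((2 * Real.pi * (inner ℝ ξ x : ℝ) : ℝ) * Complex.I)‖ ∂ν)
            = ∫ _x, (1:ℝ) ∂ν := by
              refine integral_congr_ae ?_
              filter_upwards with x using h3 x
          _ = m := by simp [hmdef, Measure.real]
      have h4 : ‖((m : ℂ))⁻¹‖ = m⁻¹ := by
        rw [norm_inv, Complex.norm_real, Real.norm_of_nonneg hm0.le]
      rw [h4]
      calc m⁻¹ * ‖∫ x, Complex.exp ((2 * Real.pi * (inner ℝ ξ x : ℝ) : ℝ) * Complex.I) ∂ν‖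
          ≤ m⁻¹ * m := by
            exact mul_le_mul_of_nonneg_left h2 (inv_nonneg.mpr hm0.le)
        _ = 1 := inv_mul_cancel₀ hm0.ne'
    rw [Complex.norm_real, Real.norm_eq_abs] at h1
    exact h1
  -- inner ℂ products of steering vectors
  have hip : ∀ α β, (inner ℂ (φ α) (φ β) : ℂ) = (K (β - α) : ℂ) := by
    intro α β
    rw [MeasureTheory.L2.inner_def]
    have hae : (fun x => (inner ℂ ((φ α : EuclideanSpace ℝ (Fin d) → ℂ) x)
        ((φ β : EuclideanSpace ℝ (Fin d) → ℂ) x) : ℂ)) =ᵐ[ν]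
        fun x => ((m : ℂ))⁻¹ *
          Complex.exp ((2 * Real.pi * (inner ℝ (β - α) x : ℝ) : ℝ) * Complex.I) := by
      filter_upwards [hφ α, hφ β] with x h1 h2
      rw [RCLike.inner_apply, h1, h2, map_mul, map_inv₀, Complex.conj_ofReal,
        ← Complex.exp_conj, map_mul, Complex.conj_ofReal, Complex.conj_I]
      have hsq : ((Real.sqrt m : ℂ))⁻¹ * ((Real.sqrt m : ℂ))⁻¹ = ((m : ℂ))⁻¹ := by
        rw [← mul_inv]
        norm_cast
        rw [Real.mul_self_sqrt hm0.le]
      have hexp : Complex.exp (((2 * Real.pi * (inner ℝ α x : ℝ) : ℝ) : ℂ) * (-Complex.I)) *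
          Complex.exp (((2 * Real.pi * (inner ℝ β x : ℝ) : ℝ) : ℂ) * Complex.I)
          = Complex.exp (((2 * Real.pi * (inner ℝ (β - α) x : ℝ) : ℝ) : ℂ) * Complex.I) := by
        rw [← Complex.exp_add]
        congr 1
        have hin : (inner ℝ (β - α) x : ℝ) = (inner ℝ β x : ℝ) - (inner ℝ α x : ℝ) :=
          inner_sub_left β α x
        rw [hin]
        push_cast
        ring
      rw [mul_mul_mul_comm, hsq, mul_comm (Complex.exp _) (Complex.exp _), hexp]
    rw [integral_congr_ae hae, integral_const_mul]
    exact (hK (β - α)).symm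
  -- `K 0 = 1`
  have hK0 : K 0 = 1 := by
    have h1 : (K 0 : ℂ) = 1 := by
      rw [hK 0]
      have h2 : ∀ x : EuclideanSpace ℝ (Fin d),
          Complex.exp ((2 * Real.pi * (inner ℝ (0 : EuclideanSpace ℝ (Fin d)) x : ℝ) : ℝ)
            * Complex.I) = 1 := by
        intro x
        rw [inner_zero_left]
        norm_num
      calc ((m : ℂ))⁻¹ * ∫ x, Complex.exp
            ((2 * Real.pi * (inner ℝ (0 : EuclideanSpace ℝ (Fin d)) x : ℝ) : ℝ) * Complex.I) ∂ν
          = ((m : ℂ))⁻¹ * ∫ _x, (1 : ℂ) ∂ν := by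
            congr 1
            exact integral_congr_ae (by filter_upwards with x using h2 x)
        _ = ((m : ℂ))⁻¹ * (m : ℂ) := by
            rw [integral_const]
            simp [hmdef, Measure.real]
        _ = 1 := by
            rw [inv_mul_cancel₀]
            exact_mod_cast hm0.ne'
    exact_mod_cast h1
  -- setup
  set u : Lp ℂ 2 ν := PU (φ ω) with hu
  obtain ⟨c, hc⟩ := (Submodule.mem_span_range_iff_exists_fun ℂ).mp (hPUmem (φ ω))
  rw [← hu] at hc
  set a : Fin s → ℝ := fun k => (c k).re with ha
  have horthspan : ∀ f ∈ Submodule.span ℂ (Set.range fun ℓ => φ (θ ℓ)),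
      (inner ℂ f (φ ω - u) : ℂ) = 0 :=
    fun f hf => (Submodule.mem_orthogonal _ _).mp (hPUorth (φ ω)) f hf
  have hspanmem : ∀ ℓ, φ (θ ℓ) ∈ Submodule.span ℂ (Set.range fun ℓ => φ (θ ℓ)) :=
    fun ℓ => Submodule.subset_span ⟨ℓ, rfl⟩
  have humem : u ∈ Submodule.span ℂ (Set.range fun ℓ => φ (θ ℓ)) := hPUmem (φ ω)
  -- complex Gram equations
  have hgramC : ∀ ℓ, ∑ k, c k * (K (θ k - θ ℓ) : ℂ) = (K (ω - θ ℓ) : ℂ) := by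
    intro ℓ
    have h0 := horthspan _ (hspanmem ℓ)
    rw [inner_sub_right] at h0
    have h1 : (inner ℂ (φ (θ ℓ)) (φ ω) : ℂ) = inner ℂ (φ (θ ℓ)) u := sub_eq_zero.mp h0
    have h2 : (inner ℂ (φ (θ ℓ)) u : ℂ) = ∑ k, c k * (K (θ k - θ ℓ) : ℂ) := by
      rw [← hc, inner_sum]
      refine Finset.sum_congr rfl fun k _ => ?_
      rw [inner_smul_right, hip]
    rw [← h2, ← h1, hip]
  -- real Gram equations
  have hGa : ∀ ℓ, ∑ k, a k * K (θ k - θ ℓ) = K (ω - θ ℓ) := by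
    intro ℓ
    have h1 := congrArg Complex.re (hgramC ℓ)
    simpa [Complex.mul_re, ha] using h1
  -- `B = ‖u‖²`
  set B : ℝ := ∑ ℓ, a ℓ * K (ω - θ ℓ) with hBdef
  have hBC : (inner ℂ u (φ ω) : ℂ) = ∑ k, (starRingEnd ℂ) (c k) * (K (ω - θ k) : ℂ) := by
    rw [← hc, sum_inner]
    refine Finset.sum_congr rfl fun k _ => ?_
    rw [inner_smul_left, hip]
  have huu : (inner ℂ u u : ℂ) = inner ℂ u (φ ω) := by
    have h0 := horthspan u humem
    rw [inner_sub_right] at h0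
    exact (sub_eq_zero.mp h0).symm
  have hBu : ‖u‖ ^ 2 = B := by
    rw [← inner_self_eq_norm_sq (𝕜 := ℂ) u, huu, hBC]
    simp [Complex.mul_re, ha, hBdef]
  -- Pythagoras
  have hnphi : ‖φ ω‖ ^ 2 = 1 := by
    rw [← inner_self_eq_norm_sq (𝕜 := ℂ), hip ω ω, sub_self, hK0]
    simp
  have hpyth : ‖φ ω‖ ^ 2 = ‖u‖ ^ 2 + ‖φ ω - u‖ ^ 2 := by
    have h0 : (inner ℂ u (φ ω - u) : ℂ) = 0 := horthspan u humem
    have h1 := norm_add_sq (𝕜 := ℂ) u (φ ω - u)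
    have h2 : u + (φ ω - u) = φ ω := by abel
    rw [h2, h0] at h1
    simpa using h1
  have hq : musicFun φ PU ω = 1 - B := by
    simp only [musicFun, ← hu]
    rw [hBu] at hpyth
    rw [hnphi] at hpyth
    linarith
  have hB0 : 0 ≤ B := by rw [← hBu]; positivity
  have hB1 : B ≤ 1 := by nlinarith [hpyth, hnphi, hBu, sq_nonneg ‖φ ω - u‖]
  -- sup bounds
  have hksupnn : 0 ≤ kerSupCompl K τ := Real.iSup_nonneg fun ξ => abs_nonneg _
  have hE0nn : 0 ≤ energy0 K θ Δ :=
    Real.iSup_nonneg fun ω' => Finset.sum_nonneg fun ℓ _ => sq_nonneg _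
  have hksup : ∀ ℓ, |K (ω - θ ℓ)| ≤ kerSupCompl K τ := by
    intro ℓ
    have hle : τ ≤ ‖ω - θ ℓ‖ := by rw [← dist_eq_norm]; exact hω ℓ
    have hbdd : BddAbove (Set.range fun ξ : {ξ : EuclideanSpace ℝ (Fin d) // τ ≤ ‖ξ‖}
        => |K ξ.1|) := by
      refine ⟨1, ?_⟩
      rintro x ⟨ξ, rfl⟩
      exact hKb _
    exact le_ciSup hbdd ⟨ω - θ ℓ, hle⟩
  have hE0 : ∑ ℓ ∈ Finset.univ.filter (fun ℓ => Δ / 2 ≤ dist ω (θ ℓ)), K (ω - θ ℓ) ^ 2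
      ≤ energy0 K θ Δ := by
    have hbdd : BddAbove (Set.range fun ω' : EuclideanSpace ℝ (Fin d) =>
        ∑ ℓ ∈ Finset.univ.filter (fun ℓ => Δ / 2 ≤ dist ω' (θ ℓ)), K (ω' - θ ℓ) ^ 2) := by
      refine ⟨(s : ℝ), ?_⟩
      rintro x ⟨ω', rfl⟩
      calc ∑ ℓ ∈ Finset.univ.filter (fun ℓ => Δ / 2 ≤ dist ω' (θ ℓ)), K (ω' - θ ℓ) ^ 2
          ≤ ∑ _ℓ ∈ Finset.univ.filter (fun ℓ => Δ / 2 ≤ dist ω' (θ ℓ)), (1:ℝ) := by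
            refine Finset.sum_le_sum fun ℓ _ => ?_
            rw [← sq_abs]
            exact pow_le_one₀ (abs_nonneg _) (hKb _)
        _ ≤ (s : ℝ) := by
            rw [Finset.sum_const, nsmul_eq_mul, mul_one]
            have hcard : (Finset.univ.filter (fun ℓ => Δ / 2 ≤ dist ω' (θ ℓ))).card ≤ s := by
              simpa using Finset.card_filter_le Finset.univ (fun ℓ => Δ / 2 ≤ dist ω' (θ ℓ))
            exact_mod_cast hcard
    exact le_ciSup hbdd ω
  -- `∑ K(ω-θℓ)² ≤ ksup² + E₀`
  set nb : ℝ := ∑ ℓ, K (ω - θ ℓ) ^ 2 with hnbdef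
  have hnbnn : 0 ≤ nb := Finset.sum_nonneg fun _ _ => sq_nonneg _
  have hnble : nb ≤ kerSupCompl K τ ^ 2 + energy0 K θ Δ := by
    have hsplit := Finset.sum_filter_add_sum_filter_not Finset.univ
      (fun ℓ => Δ / 2 ≤ dist ω (θ ℓ)) (fun ℓ => K (ω - θ ℓ) ^ 2)
    have hcard : (Finset.univ.filter fun ℓ => ¬ (Δ / 2 ≤ dist ω (θ ℓ))).card ≤ 1 := by
      rw [Finset.card_le_one]
      intro i hi j hj
      by_contra hij
      simp only [Finset.mem_filter, not_le] at hi hj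
      have h1 := hΔsep i j hij
      have h2 : dist (θ i) (θ j) ≤ dist (θ i) ω + dist ω (θ j) := dist_triangle _ _ _
      rw [dist_comm (θ i) ω] at h2
      linarith [hi.2, hj.2]
    have hterm : ∀ ℓ ∈ (Finset.univ.filter fun ℓ => ¬ (Δ / 2 ≤ dist ω (θ ℓ))),
        K (ω - θ ℓ) ^ 2 ≤ kerSupCompl K τ ^ 2 := by
      intro ℓ _
      rw [← sq_abs]
      exact pow_le_pow_left₀ (abs_nonneg _) (hksup ℓ) 2
    have h2 : ∑ ℓ ∈ (Finset.univ.filter fun ℓ => ¬ (Δ / 2 ≤ dist ω (θ ℓ))), K (ω - θ ℓ) ^ 2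
        ≤ kerSupCompl K τ ^ 2 := by
      calc ∑ ℓ ∈ (Finset.univ.filter fun ℓ => ¬ (Δ / 2 ≤ dist ω (θ ℓ))), K (ω - θ ℓ) ^ 2
          ≤ (Finset.univ.filter fun ℓ => ¬ (Δ / 2 ≤ dist ω (θ ℓ))).card • kerSupCompl K τ ^ 2 :=
            Finset.sum_le_card_nsmul _ _ _ hterm
        _ = ((Finset.univ.filter fun ℓ => ¬ (Δ / 2 ≤ dist ω (θ ℓ))).card : ℝ)
            * kerSupCompl K τ ^ 2 := nsmul_eq_mul _ _
        _ ≤ 1 * kerSupCompl K τ ^ 2 := by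
            refine mul_le_mul_of_nonneg_right ?_ (sq_nonneg _)
            exact_mod_cast hcard
        _ = kerSupCompl K τ ^ 2 := one_mul _
    rw [hnbdef, ← hsplit]
    linarith [hE0, h2]
  -- quadratic form identity
  have hBform : ∑ j, ∑ k, a j * K (θ j - θ k) * a k = B := by
    rw [hBdef]
    refine Finset.sum_congr rfl fun j _ => ?_
    rw [← hGa j, Finset.mul_sum]
    refine Finset.sum_congr rfl fun k _ => ?_
    rw [← neg_sub (θ k) (θ j), hKeven]
    ring
  -- extreme eigenvalue facts
  have hminmax : lamKmin ≤ lamKmax := hlamKmax.2 hlamKmin.1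
  have hlmax0 : 0 < lamKmax := lt_of_lt_of_le hlamKpos hminmax
  set M : ℝ := max |1 / lamKmax - 1| |1 / lamKmin - 1| with hMdef
  have hM : 0 ≤ M := le_trans (abs_nonneg _) (le_max_left _ _)
  set na : ℝ := ∑ i, a i ^ 2 with hnadef
  have hna0 : 0 ≤ na := Finset.sum_nonneg fun i _ => sq_nonneg _
  have hCS : B ^ 2 ≤ na * nb := by
    have h1 := Finset.sum_mul_sq_le_sq_mul_sq Finset.univ a (fun ℓ => K (ω - θ ℓ))
    simpa [hBdef, hnadef, hnbdef] using h1
  have hray : 0 < na → lamKmin * na ≤ B ∧ B ≤ lamKmax * na := by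
    intro hnapos
    have hsq : Real.sqrt na * Real.sqrt na = na := Real.mul_self_sqrt hna0
    have hsqpos : 0 < Real.sqrt na := Real.sqrt_pos.mpr hnapos
    set v : Fin s → ℝ := fun i => a i / Real.sqrt na with hv
    have hv1 : ∑ i, v i ^ 2 = 1 := by
      simp only [hv, div_pow, ← Finset.sum_div]
      rw [Real.sq_sqrt hna0, ← hnadef]
      exact div_self hnapos.ne'
    have hvform : ∑ j, ∑ k, v j * K (θ j - θ k) * v k = B / na := by
      rw [← hBform, Finset.sum_div]
      refine Finset.sum_congr rfl fun j _ => ?_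
      rw [Finset.sum_div]
      refine Finset.sum_congr rfl fun k _ => ?_
      have h1 : a j / Real.sqrt na * K (θ j - θ k) * (a k / Real.sqrt na)
          = a j * K (θ j - θ k) * a k / (Real.sqrt na * Real.sqrt na) := by ring
      rw [hv, h1, hsq]
    have hmem : B / na ∈ {r : ℝ | ∃ v : Fin s → ℝ, ∑ i, v i ^ 2 = 1 ∧
        r = ∑ j, ∑ k, v j * K (θ j - θ k) * v k} := ⟨v, hv1, hvform.symm⟩
    constructor
    · have := hlamKmin.2 hmem
      rw [le_div_iff₀ hnapos] at this
      linarith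
    · have := hlamKmax.2 hmem
      rw [div_le_iff₀ hnapos] at this
      linarith
  -- key inequality `B ≤ nb + lamKmax * M`
  have hkey : B ≤ nb + lamKmax * M := by
    rcases eq_or_lt_of_le hna0 with hnaz | hnapos
    · have haz : ∀ i, a i = 0 := by
        intro i
        have h1 := (Finset.sum_eq_zero_iff_of_nonneg
          (fun i _ => sq_nonneg (a i))).mp hnaz.symm i (Finset.mem_univ i)
        exact pow_eq_zero_iff (two_ne_zero) |>.mp h1
      have hBz : B = 0 := by
        rw [hBdef]
        exact Finset.sum_eq_zero fun i _ => by rw [haz i, zero_mul]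
      rw [hBz]
      have := mul_nonneg hlmax0.le hM
      linarith
    · obtain ⟨hray1, hray2⟩ := hray hnapos
      by_cases hcase : na ≤ B
      · -- B ≥ na : then B ≤ nb
        have h1 : B * na ≤ nb * na := by nlinarith [hCS]
        have h2 : B ≤ nb := le_of_mul_le_mul_right h1 hnapos
        have := mul_nonneg hlmax0.le hM
        linarith
      · push_neg at hcase
        have hlmin1 : lamKmin < 1 := by nlinarith
        have hMge : 1 / lamKmin - 1 ≤ M := le_trans (le_abs_self _) (le_max_right _ _)
        have e1 : na - B ≤ B * (1 / lamKmin - 1) := by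
          have h1 : na ≤ B / lamKmin := (le_div_iff₀ hlamKpos).mpr (by linarith)
          rw [mul_sub, mul_one_div, mul_one]
          linarith
        have e2 : B * (na - B) ≤ B * B * M := by nlinarith [e1, hMge, hB0]
        have e3 : B * B ≤ lamKmax * na := by nlinarith [hB0, hB1]
        have e4 : B * B * M ≤ lamKmax * na * M := mul_le_mul_of_nonneg_right e3 hM
        have e5 : B * na ≤ (nb + lamKmax * M) * na := by nlinarith [hCS]
        exact le_of_mul_le_mul_right e5 hnapos
  rw [hq]
  linarith [hkey, hnble]


end
end

section
/- Let r ≥ 1 be an integer and δ > 0, and let Γ ⊂ ℝ^r be a finite set such that |γ − γ'|_∞ ≥ δ for all distinct γ, γ' ∈ Γ and |γ_j| ≥ δ for every γ ∈ Γ and every coordinate j ∈ {1,…,r}. Then Σ_{γ∈Γ} ∏_{j=1}^r γ_j^{−2} ≤ 4^r / δ^{2r}. -/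
noncomputable def eAux : ℕ → ℝ := fun k => if k ≤ 1 then 1 else 1/((k:ℝ)-1) - 1/k

lemma eAux_nonneg (k : ℕ) : 0 ≤ eAux k := by
  unfold eAux
  split_ifs with h
  · norm_num
  · push_neg at h
    have hk : (2:ℝ) ≤ (k:ℝ) := by exact_mod_cast h
    have h1 : (0:ℝ) < (k:ℝ) - 1 := by linarith
    have : 1/(k:ℝ) ≤ 1/((k:ℝ)-1) := one_div_le_one_div_of_le h1 (by linarith)
    linarith

lemma sum_Icc_eAux (N : ℕ) (hN : 1 ≤ N) :
    ∑ k ∈ Finset.Icc 1 N, eAux k = 2 - 1/(N:ℝ) := by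
  induction N, hN using Nat.le_induction with
  | base => simp [eAux]; norm_num
  | succ n hn ih =>
    rw [Finset.sum_Icc_succ_top (by omega : 1 ≤ n+1), ih]
    have h2 : ¬ (n+1 ≤ 1) := by omega
    have hn0 : (n:ℝ) ≠ 0 := Nat.cast_ne_zero.mpr (by omega)
    have hn1 : (n:ℝ) + 1 ≠ 0 := by positivity
    simp only [eAux, if_neg h2]
    push_cast
    simp only [add_sub_cancel_right]
    field_simp
    ring

lemma sum_eAux_le (T : Finset ℕ) (hT : 0 ∉ T) : ∑ k ∈ T, eAux k ≤ 2 := by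
  rcases T.eq_empty_or_nonempty with rfl | hne
  · simp
  · set N := T.max' hne with hNdef
    have hNT : N ∈ T := T.max'_mem hne
    have hN1 : 1 ≤ N := by
      rcases Nat.eq_zero_or_pos N with h | h
      · exact absurd (h ▸ hNT) hT
      · exact h
    have hsub : T ⊆ Finset.Icc 1 N := by
      intro k hk
      simp only [Finset.mem_Icc]
      refine ⟨?_, T.le_max' k hk⟩
      rcases Nat.eq_zero_or_pos k with h | h
      · exact absurd (h ▸ hk) hT
      · exact h
    have h1 := Finset.sum_le_sum_of_subset_of_nonneg hsub (fun k _ _ => eAux_nonneg k)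
    rw [sum_Icc_eAux N hN1] at h1
    have h2 : (0:ℝ) ≤ 1/(N:ℝ) := by positivity
    linarith

noncomputable def cAux : ℤ → ℝ := fun m => ((max 1 (|(m:ℝ)| - 1/2))^2)⁻¹

lemma cAux_nonneg (m : ℤ) : 0 ≤ cAux m := by unfold cAux; positivity

lemma cAux_le_eAux (m : ℤ) : cAux m ≤ eAux m.natAbs := by
  unfold cAux eAux
  have habs : |(m:ℝ)| = (m.natAbs : ℝ) := by
    rw [Nat.cast_natAbs, Int.cast_abs]
  split_ifs with h
  · have h1 : (1:ℝ) ≤ max 1 (|(m:ℝ)| - 1/2) := le_max_left _ _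
    have h2 : (1:ℝ) ≤ (max 1 (|(m:ℝ)| - 1/2))^2 := by nlinarith
    have h3 : (0:ℝ) < (max 1 (|(m:ℝ)| - 1/2))^2 := by positivity
    rw [inv_le_one_iff₀]
    right; exact h2
  · push_neg at h
    have hk : (2:ℝ) ≤ (m.natAbs : ℝ) := by exact_mod_cast h
    set k : ℝ := (m.natAbs : ℝ) with hkdef
    have hmax : max 1 (|(m:ℝ)| - 1/2) = k - 1/2 := by
      rw [habs]; exact max_eq_right (by linarith)
    rw [hmax]
    have hk1 : k - 1 ≠ 0 := by intro h; nlinarith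
    have hk0 : k ≠ 0 := by intro h; nlinarith
    have hrw : 1/(k-1) - 1/k = ((k-1)*k)⁻¹ := by
      field_simp
      ring
    rw [hrw]
    apply inv_anti₀ (by nlinarith)
    nlinarith

lemma sum_cAux_le (S : Finset ℤ) (hS : ∀ m ∈ S, m ≠ 0) : ∑ m ∈ S, cAux m ≤ 4 := by
  have step : ∑ m ∈ S, cAux m ≤ ∑ m ∈ S, eAux m.natAbs :=
    Finset.sum_le_sum (fun m _ => cAux_le_eAux m)
  have hsplit := Finset.sum_filter_add_sum_filter_not S (fun m => 0 < m)
    (fun m => eAux m.natAbs)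
  have hpos : ∑ m ∈ S.filter (fun m => 0 < m), eAux m.natAbs ≤ 2 := by
    have hinj : ∀ a ∈ S.filter (fun m => 0 < m), ∀ b ∈ S.filter (fun m => 0 < m),
        a.natAbs = b.natAbs → a = b := by
      intro a ha b hb hab
      have ha' := (Finset.mem_filter.mp ha).2
      have hb' := (Finset.mem_filter.mp hb).2
      omega
    rw [← Finset.sum_image (f := eAux) (g := Int.natAbs) hinj]
    apply sum_eAux_le
    intro h0
    obtain ⟨m, hm, hm0⟩ := Finset.mem_image.mp h0
    have := (Finset.mem_filter.mp hm).2
    omega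
  have hneg : ∑ m ∈ S.filter (fun m => ¬ 0 < m), eAux m.natAbs ≤ 2 := by
    have hinj : ∀ a ∈ S.filter (fun m => ¬ 0 < m), ∀ b ∈ S.filter (fun m => ¬ 0 < m),
        a.natAbs = b.natAbs → a = b := by
      intro a ha b hb hab
      have ha' := (Finset.mem_filter.mp ha).2
      have hb' := (Finset.mem_filter.mp hb).2
      have ha0 := hS a (Finset.mem_filter.mp ha).1
      have hb0 := hS b (Finset.mem_filter.mp hb).1
      omega
    rw [← Finset.sum_image (f := eAux) (g := Int.natAbs) hinj]
    apply sum_eAux_le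
    intro h0
    obtain ⟨m, hm, hm0⟩ := Finset.mem_image.mp h0
    have := hS m (Finset.mem_filter.mp hm).1
    omega
  linarith

lemma floor_bound (δ x : ℝ) (hδ : 0 < δ) (hx : δ ≤ |x|) :
    ⌊x/δ + 1/2⌋ ≠ 0 ∧ δ * max 1 (|((⌊x/δ + 1/2⌋ : ℤ) : ℝ)| - 1/2) ≤ |x| := by
  set m := ⌊x/δ + 1/2⌋ with hm
  have h1 : (m:ℝ) ≤ x/δ + 1/2 := Int.floor_le _
  have h2 : x/δ + 1/2 < m + 1 := Int.lt_floor_add_one _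
  rcases le_or_gt 0 x with hx0 | hx0
  · have hxδ : δ ≤ x := by rwa [abs_of_nonneg hx0] at hx
    have hxd : 1 ≤ x/δ := (one_le_div hδ).mpr hxδ
    have hm1 : 1 ≤ m := by
      rw [hm]
      apply Int.le_floor.mpr
      push_cast
      linarith
    have hm1' : (1:ℝ) ≤ (m:ℝ) := by exact_mod_cast hm1
    have habs : |((m:ℤ):ℝ)| = (m:ℝ) := abs_of_pos (by linarith)
    refine ⟨by omega, ?_⟩
    rw [abs_of_nonneg hx0, habs]
    have hle : max 1 ((m:ℝ) - 1/2) ≤ x/δ := max_le hxd (by linarith)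
    calc δ * max 1 ((m:ℝ) - 1/2) ≤ δ * (x/δ) := by
          exact mul_le_mul_of_nonneg_left hle hδ.le
      _ = x := by field_simp
  · have hxδ : δ ≤ -x := by rwa [abs_of_neg hx0] at hx
    have hxd : 1 ≤ -x/δ := (one_le_div hδ).mpr hxδ
    have hm1 : m ≤ -1 := by
      have : (m:ℝ) ≤ -1/2 := by
        have hxδ' : x/δ ≤ -1 := by
          rw [div_le_iff₀ hδ]
          linarith
        linarith
      have : (m:ℝ) < 0 := by linarith
      have : m < 0 := by exact_mod_cast this
      omega
    have hm1' : (m:ℝ) ≤ -1 := by exact_mod_cast hm1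
    have habs : |((m:ℤ):ℝ)| = -(m:ℝ) := abs_of_neg (by linarith)
    refine ⟨by omega, ?_⟩
    rw [abs_of_neg hx0, habs]
    have hle : max 1 (-(m:ℝ) - 1/2) ≤ -x/δ := by
      apply max_le hxd
      have hxx : x/δ < (m:ℝ) + 1/2 := by linarith
      have : -(m:ℝ) - 1/2 < -x/δ := by
        calc -(m:ℝ) - 1/2 = -((m:ℝ)+1/2) := by ring
          _ < -(x/δ) := neg_lt_neg hxx
          _ = -x/δ := by ring
      linarith
    calc δ * max 1 (-(m:ℝ) - 1/2) ≤ δ * (-x/δ) := by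
          exact mul_le_mul_of_nonneg_left hle hδ.le
      _ = -x := by rw [mul_comm]; exact div_mul_cancel₀ (-x) hδ.ne'

/-- **Box-packing bound.**
If `Γ ⊂ ℝ^r` is finite with pairwise ℓ∞ separation at least `δ` and every
coordinate of every point of `Γ` is at least `δ` in absolute value, then
`∑_{γ∈Γ} ∏_j γ_j⁻² ≤ 4^r/δ^{2r}`. -/
theorem stmt11 (r : ℕ) (hr : 1 ≤ r) (δ : ℝ) (hδ : 0 < δ)
    (Γ : Finset (Fin r → ℝ))
    (hsep : ∀ γ ∈ Γ, ∀ γ' ∈ Γ, γ ≠ γ' → δ ≤ ⨆ j, |γ j - γ' j|)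
    (hcoord : ∀ γ ∈ Γ, ∀ j, δ ≤ |γ j|) :
    ∑ γ ∈ Γ, ∏ j, (γ j ^ 2)⁻¹ ≤ 4 ^ r / δ ^ (2 * r) := by
  haveI hne : Nonempty (Fin r) := ⟨⟨0, hr⟩⟩
  set N : (Fin r → ℝ) → Fin r → ℤ := fun γ j => ⌊γ j / δ + 1/2⌋ with hNdef
  have hkey : ∀ γ ∈ Γ, ∀ j, N γ j ≠ 0 ∧ δ * max 1 (|((N γ j : ℤ):ℝ)| - 1/2) ≤ |γ j| :=
    fun γ hγ j => floor_bound δ (γ j) hδ (hcoord γ hγ j)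
  have hinj : ∀ γ ∈ Γ, ∀ γ' ∈ Γ, N γ = N γ' → γ = γ' := by
    intro γ hγ γ' hγ' hNe
    by_contra hne'
    have hs := hsep γ hγ γ' hγ' hne'
    obtain ⟨j0, hj0⟩ := Finite.exists_max (fun j => |γ j - γ' j|)
    have hlt : ∀ j, |γ j - γ' j| < δ := by
      intro j
      have e1 : ⌊γ j / δ + 1/2⌋ = ⌊γ' j / δ + 1/2⌋ := by
        have := congrFun hNe j
        simpa [hNdef] using this
      have a1 : ((⌊γ j/δ + 1/2⌋:ℤ):ℝ) ≤ γ j/δ + 1/2 := Int.floor_le _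
      have a2 : γ j/δ + 1/2 < (⌊γ j/δ + 1/2⌋:ℤ) + 1 := Int.lt_floor_add_one _
      have b1 : ((⌊γ' j/δ+1/2⌋:ℤ):ℝ) ≤ γ' j/δ + 1/2 := Int.floor_le _
      have b2 : γ' j/δ + 1/2 < (⌊γ' j/δ+1/2⌋:ℤ) + 1 := Int.lt_floor_add_one _
      rw [e1] at a1 a2
      have hlt1 : |γ j/δ - γ' j/δ| < 1 := by
        rw [abs_lt]; constructor <;> push_cast at a1 a2 b1 b2 ⊢ <;> linarith
      have hd : γ j/δ - γ' j/δ = (γ j - γ' j)/δ := by ring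
      rw [hd, abs_div, abs_of_pos hδ] at hlt1
      calc |γ j - γ' j| = |γ j - γ' j|/δ * δ := by field_simp
        _ < 1 * δ := mul_lt_mul_of_pos_right hlt1 hδ
        _ = δ := one_mul δ
    have hsup : (⨆ j, |γ j - γ' j|) ≤ |γ j0 - γ' j0| := ciSup_le hj0
    linarith [hlt j0]
  have hcb : ∀ γ ∈ Γ, ∏ j, ((γ j)^2)⁻¹ ≤ ((δ^2)⁻¹)^r * ∏ j, cAux (N γ j) := by
    intro γ hγ
    have hstep : ∏ j, ((γ j)^2)⁻¹ ≤ ∏ j, ((δ^2)⁻¹ * cAux (N γ j)) := by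
      apply Finset.prod_le_prod
      · intro j _
        have := hcoord γ hγ j
        have : (0:ℝ) < |γ j| := lt_of_lt_of_le hδ this
        positivity
      · intro j _
        obtain ⟨-, hb⟩ := hkey γ hγ j
        set M := max 1 (|((N γ j:ℤ):ℝ)| - 1/2) with hM
        have hM1 : (1:ℝ) ≤ M := le_max_left _ _
        have h2 : (δ*M)^2 ≤ (γ j)^2 := by
          rw [← sq_abs (γ j)]
          apply pow_le_pow_left₀ (by positivity) hb
        have h3 : ((γ j)^2)⁻¹ ≤ ((δ*M)^2)⁻¹ := inv_anti₀ (by positivity) h2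
        calc ((γ j)^2)⁻¹ ≤ ((δ*M)^2)⁻¹ := h3
          _ = (δ^2)⁻¹ * (M^2)⁻¹ := by rw [mul_pow, mul_inv]
          _ = (δ^2)⁻¹ * cAux (N γ j) := rfl
    calc ∏ j, ((γ j)^2)⁻¹ ≤ ∏ j, ((δ^2)⁻¹ * cAux (N γ j)) := hstep
      _ = ((δ^2)⁻¹)^r * ∏ j, cAux (N γ j) := by
        rw [Finset.prod_mul_distrib, Finset.prod_const, Finset.card_univ, Fintype.card_fin]
  have hsum2 : ∑ γ ∈ Γ, ∏ j, cAux (N γ j) ≤ 4^r := by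
    rw [← Finset.sum_image (f := fun m => ∏ j, cAux (m j)) (g := N) hinj]
    set T : Fin r → Finset ℤ := fun j => (Γ.image N).image (fun m => m j) with hT
    have hsub : Γ.image N ⊆ Fintype.piFinset T := by
      intro m hm
      rw [Fintype.mem_piFinset]
      intro j
      exact Finset.mem_image_of_mem _ hm
    calc ∑ m ∈ Γ.image N, ∏ j, cAux (m j)
        ≤ ∑ m ∈ Fintype.piFinset T, ∏ j, cAux (m j) :=
          Finset.sum_le_sum_of_subset_of_nonneg hsub
            (fun m _ _ => Finset.prod_nonneg (fun j _ => cAux_nonneg _))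
      _ = ∏ j, ∑ k ∈ T j, cAux k := (Finset.prod_univ_sum T (fun _ k => cAux k)).symm
      _ ≤ ∏ _j : Fin r, (4:ℝ) := by
          apply Finset.prod_le_prod
          · intro j _
            exact Finset.sum_nonneg fun k _ => cAux_nonneg k
          · intro j _
            apply sum_cAux_le
            intro k hk
            obtain ⟨m, hm, rfl⟩ := Finset.mem_image.mp hk
            obtain ⟨γ, hγ, rfl⟩ := Finset.mem_image.mp hm
            exact (hkey γ hγ j).1
      _ = 4^r := by rw [Finset.prod_const, Finset.card_univ, Fintype.card_fin]
  calc ∑ γ ∈ Γ, ∏ j, ((γ j)^2)⁻¹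
      ≤ ∑ γ ∈ Γ, ((δ^2)⁻¹)^r * ∏ j, cAux (N γ j) := Finset.sum_le_sum hcb
    _ = ((δ^2)⁻¹)^r * ∑ γ ∈ Γ, ∏ j, cAux (N γ j) := by rw [Finset.mul_sum]
    _ ≤ ((δ^2)⁻¹)^r * 4^r := mul_le_mul_of_nonneg_left hsum2 (by positivity)
    _ = 4^r / δ^(2*r) := by
        rw [pow_mul, inv_pow, mul_comm, ← div_eq_mul_inv]
end

section
/- Fix d ≥ 1. There exist constants c > 0 and c' > 0 depending only on d with the following property. Let s ≥ 2, β ≥ 1, let m ≥ 2βs, let p ∈ [1,∞], and let 0 < ε ≤ c'·m^{d/p} (with the convention d/p = 0 when p = ∞). Let X_⋆ := B_{2m} ⊂ ℝ^d be the closed Euclidean ball of radius 2m centered at the origin. Then for every function ψ : (X_⋆ → ℂ) → (ℝ^d)^s there exist distinct θ_1,…,θ_s ∈ [0,1]^d with m·min_{j≠k}|θ_j − θ_k| ≥ β, amplitudes a_1,…,a_s ∈ ℂ with min_ℓ |a_ℓ| = 1, and a measurable η : X_⋆ → ℂ with ‖η‖_{L^p(B_{2m})} ≤ ε, such that the matching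 distance between ϑ = (θ_1,…,θ_s) and ψ(ỹ) is at least c·ε/m^{1+d/p}, where ỹ : X_⋆ → ℂ is given by ỹ(x) := Σ_{ℓ=1}^s a_ℓ e^{2πi θ_ℓ·x} + η(x). -/
noncomputable section

open MeasureTheory Metric Real
open scoped ENNReal

def matchDist {d s : ℕ} (f g : Fin s → EuclideanSpace ℝ (Fin d)) : ℝ :=
  ⨅ perm : Equiv.Perm (Fin s), ⨆ ℓ, dist (f ℓ) (g (perm ℓ))

lemma matchDist_key {d s : ℕ} (hs : 0 < s) (θ θ' q : Fin s → EuclideanSpace ℝ (Fin d))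
    (δ : ℝ) (hδ : ∀ pe : Equiv.Perm (Fin s), δ ≤ ⨆ ℓ, dist (θ ℓ) (θ' (pe ℓ))) :
    δ ≤ matchDist θ q + matchDist θ' q := by
  haveI : NeZero s := ⟨hs.ne'⟩
  set A : Equiv.Perm (Fin s) → ℝ := fun σ => ⨆ ℓ, dist (θ ℓ) (q (σ ℓ)) with hA
  set B : Equiv.Perm (Fin s) → ℝ := fun τ => ⨆ ℓ, dist (θ' ℓ) (q (τ ℓ)) with hB
  obtain ⟨σ₀, hσ₀⟩ := Finite.exists_min A
  obtain ⟨τ₀, hτ₀⟩ := Finite.exists_min B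
  have hmA : matchDist θ q = A σ₀ :=
    le_antisymm (ciInf_le (Finite.bddBelow_range _) σ₀) (le_ciInf hσ₀)
  have hmB : matchDist θ' q = B τ₀ :=
    le_antisymm (ciInf_le (Finite.bddBelow_range _) τ₀) (le_ciInf hτ₀)
  rw [hmA, hmB]
  refine (hδ (σ₀.trans τ₀.symm)).trans (ciSup_le fun ℓ => ?_)
  have h1 : dist (θ ℓ) (θ' (τ₀.symm (σ₀ ℓ))) ≤
      dist (θ ℓ) (q (σ₀ ℓ)) + dist (θ' (τ₀.symm (σ₀ ℓ))) (q (τ₀ (τ₀.symm (σ₀ ℓ)))) := by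
    rw [Equiv.apply_symm_apply, dist_comm (θ' _)]
    exact dist_triangle _ _ _
  refine h1.trans (add_le_add ?_ ?_)
  · exact le_ciSup (Finite.bddAbove_range fun j => dist (θ j) (q (σ₀ j))) ℓ
  · exact le_ciSup (Finite.bddAbove_range fun j => dist (θ' j) (q (τ₀ j))) (τ₀.symm (σ₀ ℓ))

lemma one_le_abs_nat_sub {a b : ℕ} (h : a ≠ b) : (1:ℝ) ≤ |(a:ℝ) - (b:ℝ)| := by
  rcases h.lt_or_gt with h' | h'
  · have : (a:ℝ) + 1 ≤ b := by exact_mod_cast h'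
    rw [abs_sub_comm, abs_of_nonneg (by linarith)]; linarith
  · have : (b:ℝ) + 1 ≤ a := by exact_mod_cast h'
    rw [abs_of_nonneg (by linarith)]; linarith

set_option maxHeartbeats 2000000 in
/-- **Minimax lower bound for spectral estimation on the ball.**
For every estimator `ψ` mapping data on `X_⋆ = B_{2m} ⊂ ℝ^d` to `s` points of
`ℝ^d`, there is a `β/m`-separated configuration `θ ⊂ [0,1]^d`, amplitudes `a`
with `min |a_ℓ| = 1`, and measurable noise `η` with `‖η‖_{L^p(B_{2m})} ≤ ε`,
such that `ψ` applied to the noisy data `ỹ` errs by at least `c·ε/m^{1+d/p}`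
in matching distance. -/
theorem stmt19 (d : ℕ) (hd : 1 ≤ d) :
    ∃ c > (0 : ℝ), ∃ c' > (0 : ℝ),
      ∀ s : ℕ, 2 ≤ s → ∀ β : ℝ, 1 ≤ β → ∀ m : ℝ, 2 * β * s ≤ m →
      ∀ p : ℝ≥0∞, 1 ≤ p →
      ∀ ε : ℝ, 0 < ε → ε ≤ c' * m ^ ((d : ℝ) / p.toReal) →
      ∀ ψ : (↥(Metric.closedBall (0 : EuclideanSpace ℝ (Fin d)) (2 * m)) → ℂ) →
              (Fin s → EuclideanSpace ℝ (Fin d)),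
        ∃ θ : Fin s → EuclideanSpace ℝ (Fin d), ∃ a : Fin s → ℂ,
        ∃ η : EuclideanSpace ℝ (Fin d) → ℂ,
          (∀ ℓ i, θ ℓ i ∈ Set.Icc (0 : ℝ) 1) ∧
          (∀ j k, j ≠ k → β ≤ m * dist (θ j) (θ k)) ∧
          (∀ ℓ, 1 ≤ ‖a ℓ‖) ∧ (∃ ℓ, ‖a ℓ‖ = 1) ∧
          Measurable η ∧
          eLpNorm η p (volume.restrict (Metric.closedBall 0 (2 * m))) ≤ ENNReal.ofReal ε ∧
          c * ε / m ^ ((1 : ℝ) + (d : ℝ) / p.toReal) ≤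
            matchDist θ (ψ (fun x =>
              (∑ ℓ, a ℓ *
                Complex.exp ((2 * Real.pi *
                    (inner ℝ (θ ℓ) (x : EuclideanSpace ℝ (Fin d)) : ℝ) : ℝ)
                  * Complex.I)) + η x)) := by
  classical
  set V : ℝ := (volume (Metric.ball (0:EuclideanSpace ℝ (Fin d)) 1)).toReal with hVdef
  have hVpos : 0 < V :=
    ENNReal.toReal_pos (measure_ball_pos volume 0 one_pos).ne' measure_ball_lt_top.ne
  set K : ℝ := max ((2:ℝ)^d * V) 1 with hKdef
  have hK1 : (1:ℝ) ≤ K := le_max_right _ _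
  have hKpos : (0:ℝ) < K := lt_of_lt_of_le one_pos hK1
  have hπ : (3:ℝ) ≤ π := by linarith [Real.pi_gt_three]
  have hπ0 : (0:ℝ) < π := by linarith
  refine ⟨1/(16*π*K), by positivity, 1, one_pos, ?_⟩
  intro s hs β hβ m hm p hp ε hε hεle ψ
  haveI : NeZero s := ⟨by omega⟩
  have hs2 : (2:ℝ) ≤ (s:ℝ) := by exact_mod_cast hs
  have hm4 : (4:ℝ) ≤ m := by nlinarith
  have hm0 : (0:ℝ) < m := by linarith
  -- exponent facts
  have hpt0 : 0 ≤ p.toReal⁻¹ := by positivity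
  have hpt1 : p.toReal⁻¹ ≤ 1 := by
    rcases eq_or_ne p ⊤ with h | h
    · simp [h]
    · have h1 : (1:ℝ) ≤ p.toReal := by
        have := ENNReal.toReal_mono h hp
        simpa using this
      exact inv_le_one_of_one_le₀ h1
  set dq : ℝ := (d:ℝ) / p.toReal with hdq
  have hdq_eq : dq = (d:ℝ) * p.toReal⁻¹ := by rw [hdq, div_eq_mul_inv]
  set mdq : ℝ := m ^ dq with hmdq
  have hmdqpos : 0 < mdq := Real.rpow_pos_of_pos hm0 _
  have hpow : m ^ ((1:ℝ) + dq) = m * mdq := by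
    rw [Real.rpow_add hm0, Real.rpow_one, hmdq]
  set δ : ℝ := ε / (8*π*K*(m * mdq)) with hδdef
  have hδpos : 0 < δ := by positivity
  have hεmdq : ε ≤ mdq := by simpa using hεle
  have hKm1 : (1:ℝ) ≤ K * m := by nlinarith
  have h8 : (1:ℝ) ≤ 8*π*K*m := by nlinarith
  have h8pos : (0:ℝ) < 8*π*K*m := by positivity
  have hδm : δ ≤ 1 / (8*π*K*m) := by
    rw [hδdef]
    rw [div_le_div_iff₀ (by positivity) h8pos]
    calc ε * (8*π*K*m) ≤ mdq * (8*π*K*m) := by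
          apply mul_le_mul_of_nonneg_right hεmdq (by positivity)
      _ = 1 * (8*π*K*(m*mdq)) := by ring
  have hδβm : δ ≤ β / m := by
    have h1 : 1/(8*π*K*m) ≤ 1/m := by
      apply one_div_le_one_div_of_le hm0
      nlinarith
    have h2 : 1/m ≤ β/m := by gcongr
    exact hδm.trans (h1.trans h2)
  have hδ1 : δ ≤ 1 := by
    have : 1/(8*π*K*m) ≤ 1 := by
      rw [div_le_one h8pos]; exact h8
    linarith
  -- geometry
  set i0 : Fin d := ⟨0, hd⟩ with hi0
  set u : EuclideanSpace ℝ (Fin d) := EuclideanSpace.single i0 (1:ℝ) with hu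
  have hnu : ‖u‖ = 1 := by rw [hu, EuclideanSpace.norm_single]; simp
  have hdist : ∀ x y : ℝ, dist (x • u) (y • u) = |x - y| := by
    intro x y
    rw [dist_eq_norm, ← sub_smul, norm_smul, hnu, mul_one, Real.norm_eq_abs]
  have hβ0 : (0:ℝ) < β := by linarith
  set cA : Fin s → ℝ := fun j => 2*β*((j:ℕ):ℝ)/m with hcA
  set cB : Fin s → ℝ := fun j => if j = 0 then δ else cA j with hcB
  set θA : Fin s → EuclideanSpace ℝ (Fin d) := fun j => cA j • u with hθA
  set θB : Fin s → EuclideanSpace ℝ (Fin d) := fun j => cB j • u with hθB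
  have hcA0 : ∀ j, 0 ≤ cA j := by intro j; rw [hcA]; positivity
  have hcA1 : ∀ j, cA j ≤ 1 := by
    intro j
    have hjn : (j:ℕ) < s := j.isLt
    have hj : ((j:ℕ):ℝ) + 1 ≤ (s:ℝ) := by exact_mod_cast hjn
    rw [hcA, div_le_one hm0]; nlinarith
  have hcAlow : ∀ j : Fin s, j ≠ 0 → 2*β/m ≤ cA j := by
    intro j hj
    have hj1 : (1:ℝ) ≤ ((j:ℕ):ℝ) := by
      have : 1 ≤ (j:ℕ) := Nat.one_le_iff_ne_zero.mpr (fun h => hj (Fin.ext (by simp [h])))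
      exact_mod_cast this
    rw [hcA]; dsimp only
    rw [div_le_div_iff₀ hm0 hm0]
    nlinarith [mul_le_mul_of_nonneg_right (mul_le_mul_of_nonneg_left hj1 (by linarith : (0:ℝ) ≤ 2*β)) hm0.le]
  have hcB0 : ∀ j, δ ≤ cB j := by
    intro j; rw [hcB]; dsimp only
    split
    · exact le_refl δ
    · next h =>
      have := hcAlow j h
      have hβm : β/m ≤ 2*β/m := by gcongr; linarith
      linarith [hδβm]
  have hcB1 : ∀ j, cB j ≤ 1 := by
    intro j; rw [hcB]; dsimp only; split
    · exact hδ1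
    · exact hcA1 j
  have hcBnn : ∀ j, 0 ≤ cB j := fun j => le_trans hδpos.le (hcB0 j)
  have hrange : ∀ (g : Fin s → ℝ), (∀ j, 0 ≤ g j) → (∀ j, g j ≤ 1) →
      ∀ (ℓ : Fin s) (i : Fin d), (g ℓ • u) i ∈ Set.Icc (0:ℝ) 1 := by
    intro g h0 h1 ℓ i
    have he : (g ℓ • u) i = g ℓ * (if i = i0 then 1 else 0) := by
      rw [hu]; simp [EuclideanSpace.single_apply]
    rw [he]
    split
    · rw [mul_one]; exact ⟨h0 ℓ, h1 ℓ⟩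
    · rw [mul_zero]; exact ⟨le_refl 0, zero_le_one⟩
  have hAcomp : ∀ j k : Fin s, j ≠ k → β ≤ m * |cA j - cA k| := by
    intro j k hjk
    have h1 : (1:ℝ) ≤ |((j:ℕ):ℝ) - ((k:ℕ):ℝ)| :=
      one_le_abs_nat_sub (fun h => hjk (Fin.val_injective h))
    have e1 : cA j - cA k = (2*β*(((j:ℕ):ℝ) - ((k:ℕ):ℝ)))/m := by rw [hcA]; ring
    rw [e1, abs_div, abs_of_pos hm0, mul_div_cancel₀ _ hm0.ne', abs_mul,
      abs_of_pos (by linarith : (0:ℝ) < 2*β)]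
    nlinarith
  have hsepA : ∀ j k, j ≠ k → β ≤ m * dist (θA j) (θA k) := by
    intro j k hjk
    rw [hθA]; dsimp only; rw [hdist]
    exact hAcomp j k hjk
  have hkeyB : ∀ k : Fin s, k ≠ 0 → β ≤ m * |cB 0 - cB k| := by
    intro k hk
    have h1 := hcAlow k hk
    have h2 : cB 0 = δ := by rw [hcB]; simp
    have h3 : cB k = cA k := by rw [hcB]; simp [hk]
    have hb2 : β/m ≤ 2*β/m := by
      rw [div_le_div_iff₀ hm0 hm0]; nlinarith
    rw [h2, h3, abs_sub_comm, abs_of_nonneg (by linarith [hδβm])]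
    have hδβ : δ ≤ β/m := hδβm
    have : 2*β/m - β/m ≤ cA k - δ := by linarith
    calc β = m * (2*β/m - β/m) := by field_simp; ring
      _ ≤ m * (cA k - δ) := by gcongr
  have hsepB : ∀ j k, j ≠ k → β ≤ m * dist (θB j) (θB k) := by
    intro j k hjk
    rw [hθB]; dsimp only; rw [hdist]
    rcases eq_or_ne j 0 with hj | hj
    · subst hj; exact hkeyB k (Ne.symm hjk)
    rcases eq_or_ne k 0 with hk | hk
    · subst hk; rw [abs_sub_comm]; exact hkeyB j hj
    have h3 : cB j = cA j := by rw [hcB]; simp [hj]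
    have h4 : cB k = cA k := by rw [hcB]; simp [hk]
    rw [h3, h4]; exact hAcomp j k hjk
  -- amplitudes and noise
  set a : Fin s → ℂ := fun _ => 1 with ha
  set ηB : EuclideanSpace ℝ (Fin d) → ℂ := fun x =>
    (∑ ℓ, Complex.exp (((2 * Real.pi * (inner ℝ (θA ℓ) x : ℝ) : ℝ) : ℂ) * Complex.I))
    - ∑ ℓ, Complex.exp (((2 * Real.pi * (inner ℝ (θB ℓ) x : ℝ) : ℝ) : ℂ) * Complex.I) with hηB
  have hmeas : Measurable ηB := by
    have hcont : Continuous ηB := by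
      rw [hηB]
      apply Continuous.sub <;>
      · apply continuous_finset_sum
        intro ℓ _
        exact Complex.continuous_exp.comp
          (((Complex.continuous_ofReal.comp
            (continuous_const.mul (continuous_const.inner continuous_id))).mul continuous_const))
    exact hcont.measurable
  have hθA0 : θA 0 = (0:EuclideanSpace ℝ (Fin d)) := by
    rw [hθA]; dsimp only; rw [hcA]; simp
  have hθB0 : θB 0 = δ • u := by
    rw [hθB]; dsimp only; rw [hcB]; simp
  have hθAB : ∀ ℓ : Fin s, ℓ ≠ 0 → θB ℓ = θA ℓ := by
    intro ℓ h; rw [hθB, hθA]; dsimp only; rw [hcB]; simp [h]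
  have hηBval : ∀ x : EuclideanSpace ℝ (Fin d), ηB x =
      1 - Complex.exp (((2 * Real.pi * (δ * (inner ℝ u x : ℝ)) : ℝ) : ℂ) * Complex.I) := by
    intro x
    rw [hηB]; dsimp only
    rw [← Finset.sum_sub_distrib, Finset.sum_eq_single 0]
    · congr 1
      · rw [hθA0]
        simp [inner_zero_left]
      · rw [hθB0, real_inner_smul_left]
    · intro b _ hb; rw [hθAB b hb, sub_self]
    · intro h; exact absurd (Finset.mem_univ 0) h
  set C : ℝ := 8*π*m*δ with hC
  have hCnn : (0:ℝ) ≤ C := by positivity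
  have hKmC : K * mdq * C = ε := by
    rw [hC, hδdef]; field_simp
  have hC1 : C ≤ 1 := by
    have h1 : C ≤ 8*π*m*(1/(8*π*K*m)) := by
      rw [hC]; exact mul_le_mul_of_nonneg_left hδm (by positivity)
    have h2 : 8*π*m*(1/(8*π*K*m)) = 1/K := by field_simp
    have h3 : 1/K ≤ 1 := by rw [div_le_one hKpos]; exact hK1
    linarith
  have hbound : ∀ x : EuclideanSpace ℝ (Fin d), x ∈ Metric.closedBall (0:EuclideanSpace ℝ (Fin d)) (2*m) → ‖ηB x‖ ≤ C := by
    intro x hx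
    have hxn : ‖x‖ ≤ 2*m := by rwa [Metric.mem_closedBall, dist_zero_right] at hx
    rw [hηBval]
    set z : ℂ := ((2 * Real.pi * (δ * (inner ℝ u x : ℝ)) : ℝ) : ℂ) * Complex.I with hz
    have hinn : |(inner ℝ u x : ℝ)| ≤ 2*m :=
      (abs_real_inner_le_norm u x).trans (by rw [hnu, one_mul]; exact hxn)
    have hzabs : ‖z‖ ≤ C/2 := by
      rw [hz, norm_mul, Complex.norm_I, mul_one, Complex.norm_real, Real.norm_eq_abs, abs_mul,
        abs_of_pos (by positivity : (0:ℝ) < 2*π), abs_mul, abs_of_pos hδpos]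
      calc 2*π*(δ*|(inner ℝ u x : ℝ)|) ≤ 2*π*(δ*(2*m)) := by gcongr
        _ = C/2 := by rw [hC]; ring
    have hz1 : ‖z‖ ≤ 1 := hzabs.trans (by linarith)
    calc ‖1 - Complex.exp z‖ = ‖Complex.exp z - 1‖ := by
          rw [norm_sub_rev]
      _ ≤ 2 * ‖z‖ := Complex.norm_exp_sub_one_le hz1
      _ ≤ 2 * (C/2) := by linarith
      _ = C := by ring
  have hvol : (volume.restrict (Metric.closedBall (0:EuclideanSpace ℝ (Fin d)) (2*m))) Set.univ
      = ENNReal.ofReal ((2*m)^d * V) := by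
    rw [Measure.restrict_apply_univ]
    rw [Measure.addHaar_closedBall volume 0 (by positivity)]
    rw [ENNReal.ofReal_mul (by positivity)]
    congr 1
    · congr 2
      exact finrank_euclideanSpace_fin
    · rw [hVdef, ENNReal.ofReal_toReal measure_ball_lt_top.ne]
  have heLp : eLpNorm ηB p (volume.restrict (Metric.closedBall (0:EuclideanSpace ℝ (Fin d)) (2*m)))
      ≤ ENNReal.ofReal ε := by
    have h1 := eLpNorm_le_of_ae_bound (p := p)
      (μ := volume.restrict (Metric.closedBall (0:EuclideanSpace ℝ (Fin d)) (2*m))) (f := ηB)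
      ((ae_restrict_iff' measurableSet_closedBall).mpr (ae_of_all _ hbound))
    refine h1.trans ?_
    rw [hvol, ENNReal.ofReal_rpow_of_pos (by positivity),
      ← ENNReal.ofReal_mul (by positivity)]
    apply ENNReal.ofReal_le_ofReal
    have e1 : ((2*m)^d * V) = ((2:ℝ)^d * V) * m^d := by ring
    rw [e1, Real.mul_rpow (by positivity) (by positivity)]
    have e2 : ((m:ℝ)^d) ^ p.toReal⁻¹ = mdq := by
      rw [← Real.rpow_natCast m d, ← Real.rpow_mul hm0.le, hmdq, hdq_eq]
    rw [e2]
    have e3 : ((2:ℝ)^d * V) ^ p.toReal⁻¹ ≤ K := by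
      rcases le_or_gt ((2:ℝ)^d * V) 1 with h | h
      · exact (Real.rpow_le_one (by positivity) h hpt0).trans hK1
      · refine le_trans ?_ (le_max_left _ _)
        calc ((2:ℝ)^d * V) ^ p.toReal⁻¹ ≤ ((2:ℝ)^d * V) ^ (1:ℝ) :=
              Real.rpow_le_rpow_of_exponent_le h.le hpt1
          _ = (2:ℝ)^d * V := Real.rpow_one _
    calc ((2:ℝ)^d * V) ^ p.toReal⁻¹ * mdq * C ≤ K * mdq * C := by
          exact mul_le_mul_of_nonneg_right (mul_le_mul_of_nonneg_right e3 hmdqpos.le) hCnn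
      _ = ε := hKmC
  -- data equality and conclusion
  set dataA : ↥(Metric.closedBall (0:EuclideanSpace ℝ (Fin d)) (2*m)) → ℂ := fun x =>
    (∑ ℓ, a ℓ * Complex.exp (((2 * Real.pi *
        (inner ℝ (θA ℓ) (x : EuclideanSpace ℝ (Fin d)) : ℝ) : ℝ) : ℂ) * Complex.I)) + (fun _ : EuclideanSpace ℝ (Fin d) => (0:ℂ)) (x : EuclideanSpace ℝ (Fin d))
    with hdataA
  set q0 : Fin s → EuclideanSpace ℝ (Fin d) := ψ dataA with hq0
  have hfeq : (fun x : ↥(Metric.closedBall (0:EuclideanSpace ℝ (Fin d)) (2*m)) =>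
      (∑ ℓ, a ℓ * Complex.exp (((2 * Real.pi *
          (inner ℝ (θB ℓ) (x : EuclideanSpace ℝ (Fin d)) : ℝ) : ℝ) : ℂ) * Complex.I)) + ηB (x : EuclideanSpace ℝ (Fin d))) = dataA := by
    funext x
    rw [hdataA, ha, hηB]; dsimp only
    simp only [one_mul]
    ring
  have hlow : ∀ pe : Equiv.Perm (Fin s), δ ≤ ⨆ ℓ, dist (θA ℓ) (θB (pe ℓ)) := by
    intro pe
    have h0 : δ ≤ dist (θA 0) (θB (pe 0)) := by
      rw [hθA, hθB]; dsimp only; rw [hdist]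
      have hc0 : cA 0 = 0 := by rw [hcA]; simp
      rw [hc0, zero_sub, abs_neg, abs_of_nonneg (hcBnn _)]
      exact hcB0 _
    exact h0.trans (le_ciSup (Finite.bddAbove_range fun ℓ => dist (θA ℓ) (θB (pe ℓ))) 0)
  have hkey := matchDist_key (by omega) θA θB q0 δ hlow
  have hval : (1:ℝ)/(16*π*K) * ε / m ^ ((1:ℝ) + dq) = δ/2 := by
    rw [hpow, hδdef, div_div, one_div_mul_eq_div, div_div]
    congr 1
    ring
  by_cases hcase : δ/2 ≤ matchDist θA q0
  · refine ⟨θA, a, fun _ => 0, ?_, hsepA, ?_, ⟨0, ?_⟩, measurable_const, ?_, ?_⟩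
    · intro ℓ i; rw [hθA]; exact hrange cA hcA0 hcA1 ℓ i
    · intro ℓ; rw [ha]; simp
    · rw [ha]; simp
    · simp only [eLpNorm_zero']
      exact zero_le
    · calc (1:ℝ)/(16*π*K) * ε / m ^ ((1:ℝ) + dq) = δ/2 := hval
        _ ≤ matchDist θA q0 := hcase
  · refine ⟨θB, a, ηB, ?_, hsepB, ?_, ⟨0, ?_⟩, hmeas, heLp, ?_⟩
    · intro ℓ i; rw [hθB]; exact hrange cB hcBnn hcB1 ℓ i
    · intro ℓ; rw [ha]; simp
    · rw [ha]; simp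
    · have h2 : δ/2 ≤ matchDist θB q0 := by
        push_neg at hcase
        linarith
      calc (1:ℝ)/(16*π*K) * ε / m ^ ((1:ℝ) + dq) = δ/2 := hval
        _ ≤ matchDist θB q0 := h2
        _ = matchDist θB (ψ (fun x =>
            (∑ ℓ, a ℓ * Complex.exp (((2 * Real.pi *
                (inner ℝ (θB ℓ) (x : EuclideanSpace ℝ (Fin d)) : ℝ) : ℝ) : ℂ) * Complex.I)) + ηB (x : EuclideanSpace ℝ (Fin d)))) := by
          rw [hfeq, hq0]
end
end
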